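/- arXiv:1405.4405 — 3 statements merged into one kernel-verified Lean document; each statement's English description precedes it below -/
import Mathlib

section
/- Let μ be a probability measure on ℝ supported on [0, ∞) and s > 0. If μ̄(x)·e^{x s} converges to a positive constant c > 0 as x → +∞, then for every natural number k ≥ 2 one has (μ^{∗k})‾(x)·e^{x s} → +∞ as x → +∞. -/
open MeasureTheory Filter Topology

/-- The tail function of a measure on `ℝ`: `μ̄(x) = μ((x, ∞))`, as a real number. -/
noncomputable def tail (μ : Measure ℝ) (x : ℝ) : ℝ := (μ (Set.Ioi x)).toReal

/-- The `k`-fold convolution power of a measure on `ℝ`, with `μ^{∗0} = δ₀` and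
`μ^{∗(k+1)} = μ^{∗k} ∗ μ` (so `μ^{∗1} = μ`). -/
noncomputable def convPow (μ : Measure ℝ) : ℕ → Measure ℝ
  | 0 => Measure.dirac 0
  | k + 1 => (convPow μ k).conv μ

lemma convPow_succ (μ : Measure ℝ) (k : ℕ) : convPow μ (k + 1) = (convPow μ k).conv μ := rfl

instance convPow_prob (μ : Measure ℝ) [IsProbabilityMeasure μ] (k : ℕ) :
    IsProbabilityMeasure (convPow μ k) := by
  induction k with
  | zero => exact Measure.dirac.isProbabilityMeasure
  | succ k ih => haveI := ih; rw [convPow_succ]; infer_instance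

lemma conv_Iio_zero (ν μ : Measure ℝ) [SFinite ν] [SFinite μ]
    (hν : ν (Set.Iio 0) = 0) (hμ : μ (Set.Iio 0) = 0) : (ν.conv μ) (Set.Iio 0) = 0 := by
  rw [Measure.conv, Measure.map_apply measurable_add measurableSet_Iio]
  refine le_antisymm ?_ zero_le
  calc (ν.prod μ) ((fun p : ℝ × ℝ => p.1 + p.2) ⁻¹' Set.Iio 0)
      ≤ (ν.prod μ) ((Set.Iio 0 ×ˢ Set.univ) ∪ (Set.univ ×ˢ Set.Iio 0)) := by
        refine measure_mono ?_
        rintro ⟨a, b⟩ hab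
        simp only [Set.mem_preimage, Set.mem_Iio] at hab
        by_contra hcon
        simp only [Set.mem_union, Set.mem_prod, Set.mem_Iio, Set.mem_univ, and_true,
          true_and, not_or, not_lt] at hcon
        linarith [hcon.1, hcon.2]
    _ ≤ (ν.prod μ) (Set.Iio 0 ×ˢ Set.univ) + (ν.prod μ) (Set.univ ×ˢ Set.Iio 0) :=
        measure_union_le _ _
    _ = 0 := by rw [Measure.prod_prod, Measure.prod_prod, hν, hμ]; simp

lemma convPow_Iio (μ : Measure ℝ) [IsProbabilityMeasure μ] (hμ : μ (Set.Iio 0) = 0) :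
    ∀ k, convPow μ k (Set.Iio 0) = 0
  | 0 => by simp [convPow, Measure.dirac_apply' _ measurableSet_Iio]
  | (k + 1) => by
      rw [convPow_succ]
      exact conv_Iio_zero _ _ (convPow_Iio μ hμ k) hμ

lemma le_conv_Ioi (ν μ : Measure ℝ) [IsProbabilityMeasure ν] [SFinite μ]
    (hν : ν (Set.Iio 0) = 0) (u : ℝ) : μ (Set.Ioi u) ≤ (ν.conv μ) (Set.Ioi u) := by
  rw [Measure.conv, Measure.map_apply measurable_add measurableSet_Ioi]
  have h1 : ν (Set.Ici 0) = 1 := by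
    have h2 := measure_compl (μ := ν) (measurableSet_Iio (a := (0 : ℝ))) (measure_ne_top _ _)
    rw [hν, Set.compl_Iio] at h2
    simpa using h2
  calc μ (Set.Ioi u) = ν (Set.Ici 0) * μ (Set.Ioi u) := by rw [h1, one_mul]
    _ = (ν.prod μ) (Set.Ici 0 ×ˢ Set.Ioi u) := (Measure.prod_prod _ _).symm
    _ ≤ _ := by
        refine measure_mono ?_
        rintro ⟨a, b⟩ hab
        simp only [Set.mem_prod, Set.mem_Ici, Set.mem_Ioi] at hab
        simp only [Set.mem_preimage, Set.mem_Ioi]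
        linarith [hab.1, hab.2]

lemma mu_le_convPow (μ : Measure ℝ) [IsProbabilityMeasure μ] (hμ : μ (Set.Iio 0) = 0)
    (m : ℕ) (u : ℝ) : μ (Set.Ioi u) ≤ convPow μ (m + 1) (Set.Ioi u) := by
  rw [convPow_succ]
  exact le_conv_Ioi (convPow μ m) μ (convPow_Iio μ hμ m) u

lemma sum_le_conv (ν μ : Measure ℝ) [SFinite ν] [SFinite μ] (x : ℝ) (n : ℕ) :
    ∑ j ∈ Finset.range n, ν (Set.Ioi (x - j)) * μ (Set.Ioc (j : ℝ) (j + 1))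
      ≤ (ν.conv μ) (Set.Ioi x) := by
  rw [Measure.conv, Measure.map_apply measurable_add measurableSet_Ioi]
  have hd : (Finset.range n : Set ℕ).PairwiseDisjoint
      (fun j : ℕ => Set.Ioi (x - j) ×ˢ Set.Ioc (j : ℝ) (j + 1)) := by
    intro i _ j _ hij
    rw [Function.onFun, Set.disjoint_left]
    rintro ⟨a, b⟩ h1 h2
    simp only [Set.mem_prod, Set.mem_Ioc, Set.mem_Ioi] at h1 h2
    rcases lt_or_gt_of_ne hij with hlt | hlt
    · have : (i : ℝ) + 1 ≤ j := by exact_mod_cast hlt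
      linarith [h1.2.2, h2.2.1]
    · have : (j : ℝ) + 1 ≤ i := by exact_mod_cast hlt
      linarith [h2.2.2, h1.2.1]
  calc ∑ j ∈ Finset.range n, ν (Set.Ioi (x - j)) * μ (Set.Ioc (j : ℝ) (j + 1))
      = ∑ j ∈ Finset.range n,
          (ν.prod μ) (Set.Ioi (x - j) ×ˢ Set.Ioc (j : ℝ) (j + 1)) := by
        simp [Measure.prod_prod]
    _ = (ν.prod μ) (⋃ j ∈ Finset.range n, Set.Ioi (x - j) ×ˢ Set.Ioc (j : ℝ) (j + 1)) := by
        rw [measure_biUnion_finset hd fun j _ => (measurableSet_Ioi.prod measurableSet_Ioc)]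
    _ ≤ _ := by
        refine measure_mono ?_
        intro p hp
        simp only [Set.mem_iUnion] at hp
        obtain ⟨j, _, hj⟩ := hp
        simp only [Set.mem_prod, Set.mem_Ioi, Set.mem_Ioc] at hj
        simp only [Set.mem_preimage, Set.mem_Ioi]
        linarith [hj.1, hj.2.1]

/-- Let `μ` be a probability measure on `ℝ` supported on `[0, ∞)` and `s > 0`. If
`μ̄(x)·e^{x s}` converges to a positive constant `c > 0` as `x → +∞`, then for every `k ≥ 2`
one has `(μ^{∗k})‾(x)·e^{x s} → +∞` as `x → +∞`. -/
theorem tail_convPow_exp_tendsto_atTop (μ : Measure ℝ) [IsProbabilityMeasure μ]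
    (hμ : μ (Set.Iio 0) = 0) (s : ℝ) (hs : 0 < s) (c : ℝ) (hc : 0 < c)
    (h : Tendsto (fun x : ℝ => tail μ x * Real.exp (x * s)) atTop (𝓝 c))
    (k : ℕ) (hk : 2 ≤ k) :
    Tendsto (fun x : ℝ => tail (convPow μ k) x * Real.exp (x * s)) atTop atTop := by
  obtain ⟨m, rfl⟩ : ∃ m, k = m + 1 + 1 := ⟨k - 2, by omega⟩
  set ν := convPow μ (m + 1) with hνdef
  have hν0 : ν (Set.Iio 0) = 0 := convPow_Iio μ hμ (m + 1)
  -- eventual lower bound on the tail of μ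
  obtain ⟨M, hM⟩ := eventually_atTop.1 (h.eventually_const_le (by linarith : c / 2 < c))
  -- the mass of the interval (j, j+1]
  set p : ℕ → ℝ := fun j => (μ (Set.Ioc (j : ℝ) (j + 1))).toReal with hpdef
  have hp_eq : ∀ j : ℕ, p j = tail μ j - tail μ ((j : ℝ) + 1) := by
    intro j
    have hsub : Set.Ioc (j : ℝ) (j + 1) = Set.Ioi (j : ℝ) \ Set.Ioi ((j : ℝ) + 1) :=
      Set.Ioi_diff_Ioi.symm
    simp only [hpdef]
    rw [hsub, measure_diff (Set.Ioi_subset_Ioi (by linarith))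
        measurableSet_Ioi.nullMeasurableSet (measure_ne_top _ _),
      ENNReal.toReal_sub_of_le (measure_mono (Set.Ioi_subset_Ioi (by linarith)))
        (measure_ne_top _ _)]
    rfl
  set a : ℕ → ℝ := fun j => p j * Real.exp (j * s) with hadef
  have ha_nonneg : ∀ j, 0 ≤ a j := fun j => mul_nonneg ENNReal.toReal_nonneg (Real.exp_pos _).le
  set L : ℝ := c - c * Real.exp (-s) with hLdef
  have hexp1 : Real.exp (-s) < 1 := Real.exp_lt_one_iff.mpr (by linarith)
  have hLpos : 0 < L := by rw [hLdef]; nlinarith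
  have haT : Tendsto a atTop (𝓝 L) := by
    have h1 : Tendsto (fun j : ℕ => tail μ j * Real.exp ((j : ℝ) * s)) atTop (𝓝 c) :=
      h.comp tendsto_natCast_atTop_atTop
    have h2 : Tendsto (fun j : ℕ => tail μ ((j : ℝ) + 1) * Real.exp (((j : ℝ) + 1) * s))
        atTop (𝓝 c) :=
      h.comp (tendsto_atTop_add_const_right _ 1 tendsto_natCast_atTop_atTop)
    have h3 := h1.sub (h2.mul_const (Real.exp (-s)))
    rw [hLdef]
    refine Tendsto.congr (fun j => ?_) h3
    simp only [hadef]
    rw [hp_eq j, sub_mul]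
    congr 1
    rw [mul_assoc, ← Real.exp_add]
    congr 2
    ring
  obtain ⟨N, hN⟩ := eventually_atTop.1 (haT.eventually_const_le (by linarith : L / 2 < L))
  rw [tendsto_atTop]
  intro C
  set K : ℕ := ⌈C / (c / 2 * (L / 2))⌉₊ + 1 with hKdef
  set n : ℕ := N + K with hndef
  have hdpos : 0 < c / 2 * (L / 2) := by positivity
  have hCK : C ≤ c / 2 * (K * (L / 2)) := by
    have h5 : C / (c / 2 * (L / 2)) ≤ (K : ℝ) := by
      refine le_trans (Nat.le_ceil _) ?_
      rw [hKdef]; push_cast; linarith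
    have h6 := (div_le_iff₀ hdpos).mp h5
    calc C ≤ (K : ℝ) * (c / 2 * (L / 2)) := h6
      _ = c / 2 * (K * (L / 2)) := by ring
  filter_upwards [eventually_ge_atTop (M + n : ℝ)] with x hx
  have hxM : ∀ j ∈ Finset.range n, M ≤ x - j := by
    intro j hj
    have hjn : (j : ℝ) < n := by exact_mod_cast Finset.mem_range.1 hj
    linarith
  have htail : ∀ j ∈ Finset.range n, c / 2 * Real.exp (-((x - j) * s)) ≤ tail μ (x - j) := by
    intro j hj
    have h6 := hM (x - j) (hxM j hj)
    have h7 := mul_le_mul_of_nonneg_right h6 (Real.exp_pos (-((x - j) * s))).le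
    rw [mul_assoc, ← Real.exp_add] at h7
    simpa using h7
  have hle : ∑ j ∈ Finset.range n, ν (Set.Ioi (x - j)) * μ (Set.Ioc (j : ℝ) (j + 1))
      ≤ convPow μ (m + 1 + 1) (Set.Ioi x) := by
    rw [convPow_succ]
    exact sum_le_conv ν μ x n
  have hfin : ∀ j ∈ Finset.range n,
      ν (Set.Ioi (x - j)) * μ (Set.Ioc (j : ℝ) (j + 1)) ≠ ⊤ :=
    fun j _ => ENNReal.mul_ne_top (measure_ne_top _ _) (measure_ne_top _ _)
  have hsum_real : ∑ j ∈ Finset.range n, tail ν (x - j) * p j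
      ≤ tail (convPow μ (m + 1 + 1)) x := by
    have h8 := ENNReal.toReal_mono (measure_ne_top _ _) hle
    rw [ENNReal.toReal_sum hfin] at h8
    simp only [ENNReal.toReal_mul] at h8
    exact h8
  have hmono : ∀ j ∈ Finset.range n, tail μ (x - j) ≤ tail ν (x - j) := fun j _ =>
    ENNReal.toReal_mono (measure_ne_top _ _) (mu_le_convPow μ hμ m (x - j))
  calc C ≤ c / 2 * (K * (L / 2)) := hCK
    _ ≤ c / 2 * (∑ j ∈ Finset.Ico N n, a j) := by
        have h9 : (Finset.Ico N n).card • (L / 2) ≤ ∑ j ∈ Finset.Ico N n, a j :=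
          Finset.card_nsmul_le_sum _ _ _ (fun j hj => hN j (Finset.mem_Ico.1 hj).1)
        rw [Nat.card_Ico, nsmul_eq_mul] at h9
        have h10 : n - N = K := by omega
        rw [h10] at h9
        exact mul_le_mul_of_nonneg_left h9 (by linarith)
    _ ≤ c / 2 * (∑ j ∈ Finset.range n, a j) := by
        refine mul_le_mul_of_nonneg_left
          (Finset.sum_le_sum_of_subset_of_nonneg ?_ fun j _ _ => ha_nonneg j) (by linarith)
        intro j hj
        simp only [Finset.mem_Ico, Finset.mem_range] at *
        omega
    _ = ∑ j ∈ Finset.range n, c / 2 * Real.exp (-((x - j) * s)) * p j * Real.exp (x * s) := by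
        rw [Finset.mul_sum]
        refine Finset.sum_congr rfl fun j hj => ?_
        have hexp : Real.exp ((j : ℝ) * s)
            = Real.exp (-((x - (j : ℝ)) * s)) * Real.exp (x * s) := by
          rw [← Real.exp_add]; congr 1; ring
        simp only [hadef]
        rw [hexp]; ring
    _ ≤ ∑ j ∈ Finset.range n, tail μ (x - j) * p j * Real.exp (x * s) := by
        refine Finset.sum_le_sum fun j hj => ?_
        refine mul_le_mul_of_nonneg_right
          (mul_le_mul_of_nonneg_right (htail j hj) ENNReal.toReal_nonneg) (Real.exp_pos _).le
    _ ≤ ∑ j ∈ Finset.range n, tail ν (x - j) * p j * Real.exp (x * s) := by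
        refine Finset.sum_le_sum fun j hj => ?_
        exact mul_le_mul_of_nonneg_right
          (mul_le_mul_of_nonneg_right (hmono j hj) ENNReal.toReal_nonneg) (Real.exp_pos _).le
    _ = (∑ j ∈ Finset.range n, tail ν (x - j) * p j) * Real.exp (x * s) :=
        (Finset.sum_mul _ _ _).symm
    _ ≤ tail (convPow μ (m + 1 + 1)) x * Real.exp (x * s) :=
        mul_le_mul_of_nonneg_right hsum_real (Real.exp_pos _).le
end

section
/- Let μ be a probability measure on ℝ supported on [0, ∞) with a continuous density f with respect to Lebesgue measure, and suppose μ̄(x) > 0 for all x. If the hazard rate m(x) := f(x)/μ̄(x) converges to a finite limit L ≥ 0 as x → +∞, then C(μ) = L, where C(μ) := sup{ t ∈ ℝ : t ≥ 0 and μ̄(x)·e^{x t} → 0 as x → +∞ }. -/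
open MeasureTheory Filter Topology

/-- The parameter `C(μ) = sup { t ≥ 0 : μ̄(x)·e^{x t} → 0 as x → +∞ }`. -/
noncomputable def Cparam (μ : Measure ℝ) : ℝ :=
  sSup {t : ℝ | 0 ≤ t ∧ Tendsto (fun x : ℝ => tail μ x * Real.exp (x * t)) atTop (𝓝 0)}

/-- Let `μ` be a probability measure on `ℝ` supported on `[0, ∞)` with a continuous
nonnegative density `f` with respect to Lebesgue measure, and suppose `μ̄(x) > 0` for all
`x`.  If the hazard rate `m(x) = f(x)/μ̄(x)` converges to a finite limit `L ≥ 0` as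
`x → +∞`, then `C(μ) = L`. -/
theorem Cparam_eq_limit_hazardRate (μ : Measure ℝ) [IsProbabilityMeasure μ]
    (f : ℝ → ℝ) (hf_cont : Continuous f) (hf_nonneg : ∀ x, 0 ≤ f x)
    (hdens : μ = volume.withDensity fun x => ENNReal.ofReal (f x))
    (hμ : μ (Set.Iio 0) = 0)
    (htail : ∀ x : ℝ, 0 < tail μ x)
    (L : ℝ) (hL : 0 ≤ L)
    (hm : Tendsto (fun x : ℝ => f x / tail μ x) atTop (𝓝 L)) :
    Cparam μ = L := by
  have tail_ne : ∀ x, tail μ x ≠ 0 := fun x => (htail x).ne'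
  -- f is integrable
  have hlint : ∀ s : Set ℝ, MeasurableSet s → μ s = ∫⁻ y in s, ENNReal.ofReal (f y) := by
    intro s hs
    rw [hdens, withDensity_apply _ hs]
  have hint : Integrable f := by
    refine ⟨hf_cont.aestronglyMeasurable, ?_⟩
    rw [HasFiniteIntegral]
    have : ∫⁻ a, ‖f a‖ₑ = μ Set.univ := by
      rw [hlint Set.univ MeasurableSet.univ, Measure.restrict_univ]
      exact lintegral_congr fun a => Real.enorm_eq_ofReal (hf_nonneg a)
    rw [this, measure_univ]
    exact ENNReal.one_lt_top
  -- tail as an integral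
  have tail_eq : ∀ x, tail μ x = ∫ y in Set.Ioi x, f y := by
    intro x
    rw [tail, hlint _ measurableSet_Ioi,
      integral_eq_lintegral_of_nonneg_ae (Filter.Eventually.of_forall hf_nonneg)
        hf_cont.aestronglyMeasurable.restrict]
  -- tail via interval integral
  have tail_sub : ∀ y, tail μ y = tail μ 0 - ∫ t in (0:ℝ)..y, f t := by
    intro y
    rcases le_total 0 y with h | h
    · rw [intervalIntegral.integral_of_le h, tail_eq 0, tail_eq y,
        ← Set.Ioc_union_Ioi_eq_Ioi h,
        setIntegral_union (Set.Ioc_disjoint_Ioi le_rfl) measurableSet_Ioi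
          hint.integrableOn hint.integrableOn]
      rw [MeasureTheory.integral_Ioc_eq_integral_Ioo]
      ring
    · rw [intervalIntegral.integral_symm, intervalIntegral.integral_of_le h,
        tail_eq 0, tail_eq y, ← Set.Ioc_union_Ioi_eq_Ioi h,
        setIntegral_union (Set.Ioc_disjoint_Ioi le_rfl) measurableSet_Ioi
          hint.integrableOn hint.integrableOn]
      rw [MeasureTheory.integral_Ioc_eq_integral_Ioo]
      ring
  -- derivative of tail
  have tail_deriv : ∀ x, HasDerivAt (tail μ) (-(f x)) x := by
    intro x
    have h1 : HasDerivAt (fun y => ∫ t in (0:ℝ)..y, f t) (f x) x :=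
      intervalIntegral.integral_hasDerivAt_right hint.intervalIntegrable
        hf_cont.stronglyMeasurable.stronglyMeasurableAtFilter hf_cont.continuousAt
    have h2 : HasDerivAt (fun y => tail μ 0 - ∫ t in (0:ℝ)..y, f t) (0 - f x) x :=
      (hasDerivAt_const x (tail μ 0)).sub h1
    have h3 : (fun y => tail μ 0 - ∫ t in (0:ℝ)..y, f t) = tail μ :=
      funext fun y => (tail_sub y).symm
    rw [h3] at h2
    simpa using h2
  -- derivative of log tail
  have hlog : ∀ x, HasDerivAt (fun y => Real.log (tail μ y)) (-(f x) / tail μ x) x :=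
    fun x => (tail_deriv x).log (tail_ne x)
  -- upper bound on tail when hazard rate ≥ a on [x0, ∞)
  have hup : ∀ a x0 : ℝ, (∀ x, x0 ≤ x → a ≤ f x / tail μ x) →
      ∀ x, x0 ≤ x → tail μ x ≤ (tail μ x0 * Real.exp (a * x0)) * Real.exp (-(a * x)) := by
    intro a x0 ha
    have hd : ∀ y : ℝ, HasDerivAt (fun z => Real.log (tail μ z) + a * z)
        (-(f y) / tail μ y + a) y := by
      intro y
      exact (hlog y).add (by simpa using (hasDerivAt_id y).const_mul a)
    have hmono : AntitoneOn (fun z => Real.log (tail μ z) + a * z) (Set.Ici x0) := by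
      apply antitoneOn_of_deriv_nonpos (convex_Ici x0)
      · exact (continuous_iff_continuousAt.2
          fun y => (hd y).differentiableAt.continuousAt).continuousOn
      · exact fun y _ => (hd y).differentiableAt.differentiableWithinAt
      · intro y hy
        rw [interior_Ici] at hy
        rw [(hd y).deriv]
        have := ha y (le_of_lt hy)
        rw [neg_div]
        linarith
    intro x hx
    have h1 : Real.log (tail μ x) + a * x ≤ Real.log (tail μ x0) + a * x0 :=
      hmono Set.self_mem_Ici hx hx
    have h2 : tail μ x = Real.exp (Real.log (tail μ x)) := (Real.exp_log (htail x)).symm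
    rw [h2]
    rw [show (tail μ x0 * Real.exp (a * x0)) * Real.exp (-(a * x))
        = Real.exp (Real.log (tail μ x0) + a * x0 + -(a * x)) by
      rw [Real.exp_add, Real.exp_add, Real.exp_log (htail x0)]]
    exact Real.exp_le_exp.2 (by linarith)
  -- lower bound on tail when hazard rate ≤ a on [x0, ∞)
  have hlo : ∀ a x0 : ℝ, (∀ x, x0 ≤ x → f x / tail μ x ≤ a) →
      ∀ x, x0 ≤ x → (tail μ x0 * Real.exp (a * x0)) * Real.exp (-(a * x)) ≤ tail μ x := by
    intro a x0 ha
    have hd : ∀ y : ℝ, HasDerivAt (fun z => Real.log (tail μ z) + a * z)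
        (-(f y) / tail μ y + a) y := by
      intro y
      exact (hlog y).add (by simpa using (hasDerivAt_id y).const_mul a)
    have hmono : MonotoneOn (fun z => Real.log (tail μ z) + a * z) (Set.Ici x0) := by
      apply monotoneOn_of_deriv_nonneg (convex_Ici x0)
      · exact (continuous_iff_continuousAt.2
          fun y => (hd y).differentiableAt.continuousAt).continuousOn
      · exact fun y _ => (hd y).differentiableAt.differentiableWithinAt
      · intro y hy
        rw [interior_Ici] at hy
        rw [(hd y).deriv]
        have := ha y (le_of_lt hy)
        rw [neg_div]
        linarith
    intro x hx
    have h1 : Real.log (tail μ x0) + a * x0 ≤ Real.log (tail μ x) + a * x :=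
      hmono Set.self_mem_Ici hx hx
    have h2 : tail μ x = Real.exp (Real.log (tail μ x)) := (Real.exp_log (htail x)).symm
    rw [h2]
    rw [show (tail μ x0 * Real.exp (a * x0)) * Real.exp (-(a * x))
        = Real.exp (Real.log (tail μ x0) + a * x0 + -(a * x)) by
      rw [Real.exp_add, Real.exp_add, Real.exp_log (htail x0)]]
    exact Real.exp_le_exp.2 (by linarith)
  set S : Set ℝ :=
    {t : ℝ | 0 ≤ t ∧ Tendsto (fun x : ℝ => tail μ x * Real.exp (x * t)) atTop (𝓝 0)}
    with hS
  -- tail tends to 0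
  have htail0 : Tendsto (tail μ) atTop (𝓝 0) := by
    have h1 : Tendsto (fun x : ℝ => μ (Set.Ioi x)) atTop (𝓝 0) := by
      have h2 := tendsto_measure_iInter_atTop (μ := μ) (s := fun x : ℝ => Set.Ioi x)
        (fun i => measurableSet_Ioi.nullMeasurableSet)
        (fun a b hab => Set.Ioi_subset_Ioi hab) ⟨0, measure_ne_top μ _⟩
      have h3 : ⋂ x : ℝ, Set.Ioi x = ∅ := by
        ext y
        simp only [Set.mem_iInter, Set.mem_Ioi, Set.mem_empty_iff_false, iff_false, not_forall,
          not_lt]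
        exact ⟨y, le_rfl⟩
      rw [h3, measure_empty] at h2
      exact h2
    have h4 := (ENNReal.tendsto_toReal ENNReal.zero_ne_top).comp h1
    rw [show tail μ = fun x => (μ (Set.Ioi x)).toReal from rfl]
    simpa [Function.comp_def] using h4
  have h0S : (0:ℝ) ∈ S := by
    refine ⟨le_rfl, ?_⟩
    simpa using htail0
  -- every element of S is ≤ L
  have hsub : ∀ t ∈ S, t ≤ L := by
    intro t ht
    by_contra hlt
    push_neg at hlt
    set a := (L + t) / 2 with ha
    have haL : L < a := by rw [ha]; linarith
    have hat : a < t := by rw [ha]; linarith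
    obtain ⟨x0, hx0⟩ := (hm.eventually_lt_const haL).exists_forall_of_atTop
    set C := tail μ x0 * Real.exp (a * x0) with hC
    have hCpos : 0 < C := mul_pos (htail x0) (Real.exp_pos _)
    have hbd := hlo a x0 (fun x hx => le_of_lt (hx0 x hx))
    have hev : ∀ᶠ x : ℝ in atTop, tail μ x * Real.exp (x * t) < C :=
      ht.2.eventually_lt_const hCpos
    obtain ⟨x1, hx1⟩ := hev.exists_forall_of_atTop
    set x := max (max x0 x1) 0 with hx
    have hxx0 : x0 ≤ x := le_trans (le_max_left _ _) (le_max_left _ _)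
    have hxx1 : x1 ≤ x := le_trans (le_max_right _ _) (le_max_left _ _)
    have hx0' : (0:ℝ) ≤ x := le_max_right _ _
    have h1 : C * Real.exp (-(a * x)) ≤ tail μ x := hbd x hxx0
    have h2 : C ≤ tail μ x * Real.exp (x * t) := by
      have h3 : C = C * Real.exp (-(a * x)) * Real.exp (a * x) := by
        rw [mul_assoc, ← Real.exp_add]; simp
      calc C = C * Real.exp (-(a * x)) * Real.exp (a * x) := h3
        _ ≤ tail μ x * Real.exp (a * x) :=
            mul_le_mul_of_nonneg_right h1 (Real.exp_pos _).le
        _ ≤ tail μ x * Real.exp (x * t) := by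
            apply mul_le_mul_of_nonneg_left _ (htail x).le
            apply Real.exp_le_exp.2
            rw [mul_comm x t]
            nlinarith
    exact absurd h2 (not_le_of_gt (hx1 x hxx1))
  -- every 0 ≤ t < L is in S
  have hmem : ∀ t : ℝ, 0 ≤ t → t < L → t ∈ S := by
    intro t ht htL
    refine ⟨ht, ?_⟩
    set a := (t + L) / 2 with ha
    have hta : t < a := by rw [ha]; linarith
    have haL : a < L := by rw [ha]; linarith
    obtain ⟨x0, hx0⟩ := (hm.eventually_const_lt haL).exists_forall_of_atTop
    set C := tail μ x0 * Real.exp (a * x0) with hC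
    have hbd := hup a x0 (fun x hx => le_of_lt (hx0 x hx))
    have hlim : Tendsto (fun x : ℝ => C * Real.exp ((t - a) * x)) atTop (𝓝 0) := by
      have h1 : Tendsto (fun x : ℝ => (t - a) * x) atTop atBot :=
        tendsto_id.const_mul_atTop_of_neg (by linarith)
      have h2 := Real.tendsto_exp_atBot.comp h1
      simpa using h2.const_mul C
    apply squeeze_zero' (Filter.Eventually.of_forall fun x =>
      mul_nonneg (htail x).le (Real.exp_pos _).le) _ hlim
    filter_upwards [eventually_ge_atTop x0] with x hx
    calc tail μ x * Real.exp (x * t)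
        ≤ C * Real.exp (-(a * x)) * Real.exp (x * t) :=
          mul_le_mul_of_nonneg_right (hbd x hx) (Real.exp_pos _).le
      _ = C * Real.exp ((t - a) * x) := by
          rw [mul_assoc, ← Real.exp_add]; ring_nf
  -- conclude
  have hbdd : BddAbove S := ⟨L, hsub⟩
  rw [Cparam, ← hS]
  apply le_antisymm (csSup_le ⟨0, h0S⟩ hsub)
  rcases eq_or_lt_of_le hL with h0 | h0
  · rw [← h0]
    exact le_csSup hbdd h0S
  · apply le_of_forall_lt
    intro c hc
    rcases lt_or_ge c 0 with hc0 | hc0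
    · exact lt_of_lt_of_le hc0 (le_csSup hbdd h0S)
    · have h1 : (c + L) / 2 ∈ S := hmem _ (by linarith) (by linarith)
      exact lt_of_lt_of_le (by linarith) (le_csSup hbdd h1)
end

section
/- Let (ξ_i)_{i∈ℕ} be i.i.d. integrable nonnegative real-valued random variables on a probability space, let N be an ℕ-valued integrable random variable independent of the sequence (ξ_i), and set S := Σ_{i<N} ξ_i. Then S is integrable and E[S] = E[N]·E[ξ_0] (Wald's identity for the random sum). -/
open MeasureTheory ProbabilityTheory Filter Topology
open scoped ENNReal

/-- Wald's identity: if `(ξ i)` are i.i.d. integrable nonnegative real random variables and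
`N` is an `ℕ`-valued integrable random variable independent of the whole sequence `(ξ i)`,
then the random sum `S = Σ_{i<N} ξ i` is integrable and `E[S] = E[N]·E[ξ 0]`. -/
theorem wald_identity
    {Ω : Type*} [MeasurableSpace Ω] (P : Measure Ω) [IsProbabilityMeasure P]
    (ξ : ℕ → Ω → ℝ) (hmeas : ∀ i, Measurable (ξ i))
    (hindep : iIndepFun ξ P)
    (hident : ∀ i, IdentDistrib (ξ i) (ξ 0) P P)
    (hnonneg : ∀ i ω, 0 ≤ ξ i ω)
    (hint : Integrable (ξ 0) P)
    (N : Ω → ℕ) (hN : Measurable N)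
    (hNint : Integrable (fun ω => (N ω : ℝ)) P)
    (hNindep : IndepFun N (fun ω => fun i => ξ i ω) P) :
    Integrable (fun ω => ∑ i ∈ Finset.range (N ω), ξ i ω) P ∧
      ∫ ω, (∑ i ∈ Finset.range (N ω), ξ i ω) ∂P
        = (∫ ω, (N ω : ℝ) ∂P) * ∫ ω, ξ 0 ω ∂P := by
  classical
  set f : Ω → ℝ := fun ω => ∑ i ∈ Finset.range (N ω), ξ i ω with hf
  -- measurability of f
  have hfmeas : Measurable f := by
    have h1 : Measurable (fun p : Ω × ℕ => ∑ i ∈ Finset.range p.2, ξ i p.1) :=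
      measurable_from_prod_countable_left fun n =>
        Finset.measurable_sum (Finset.range n) fun i _ => hmeas i
    exact h1.comp (measurable_id.prodMk hN)
  -- the ℝ≥0∞-valued pieces
  set A : ℕ → Ω → ℝ≥0∞ := fun i ω => if i < N ω then 1 else 0 with hA
  set B : ℕ → Ω → ℝ≥0∞ := fun i ω => ENNReal.ofReal (ξ i ω) with hB
  have hAmeas : ∀ i, Measurable (A i) := fun i =>
    Measurable.ite (hN measurableSet_Ioi) measurable_const measurable_const
  have hBmeas : ∀ i, Measurable (B i) := fun i => ENNReal.measurable_ofReal.comp (hmeas i)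
  -- independence of A i and B i
  have hAB : ∀ i, IndepFun (A i) (B i) P := by
    intro i
    have h := hNindep.comp (φ := fun n : ℕ => if i < n then (1 : ℝ≥0∞) else 0)
      (ψ := fun x : ℕ → ℝ => ENNReal.ofReal (x i)) (measurable_of_countable _)
      (ENNReal.measurable_ofReal.comp (measurable_pi_apply i))
    exact h
  have hAint : ∀ i, ∫⁻ ω, A i ω ∂P = P {ω | i < N ω} := by
    intro i
    have he : A i = Set.indicator {ω | i < N ω} (1 : Ω → ℝ≥0∞) :=
      funext fun ω => by simp [hA, Set.indicator_apply, Set.mem_setOf_eq]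
    rw [he, lintegral_indicator_one (show MeasurableSet {ω | i < N ω} from hN measurableSet_Ioi)]
  -- pointwise decomposition: ofReal (f ω) = ∑' i, A i ω * B i ω
  have hsum : ∀ ω, ENNReal.ofReal (f ω) = ∑' i, A i ω * B i ω := by
    intro ω
    rw [hf, ENNReal.ofReal_sum_of_nonneg (fun i _ => hnonneg i ω)]
    rw [tsum_eq_sum (s := Finset.range (N ω)) (by
      intro i hi
      simp only [Finset.mem_range, not_lt] at hi
      simp [hA, Nat.not_lt.mpr hi])]
    refine Finset.sum_congr rfl fun i hi => ?_
    simp only [Finset.mem_range] at hi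
    simp [hA, hB, hi]
  -- key lintegral computation
  have hlin : ∫⁻ ω, ENNReal.ofReal (f ω) ∂P
      = (∑' i, P {ω | i < N ω}) * ∫⁻ ω, ENNReal.ofReal (ξ 0 ω) ∂P := by
    calc ∫⁻ ω, ENNReal.ofReal (f ω) ∂P = ∫⁻ ω, ∑' i, A i ω * B i ω ∂P := by
          simp_rw [hsum]
      _ = ∑' i, ∫⁻ ω, A i ω * B i ω ∂P :=
          lintegral_tsum fun i => ((hAmeas i).mul (hBmeas i)).aemeasurable
      _ = ∑' i, (∫⁻ ω, A i ω ∂P) * ∫⁻ ω, B i ω ∂P := by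
          refine tsum_congr fun i => ?_
          exact lintegral_mul_eq_lintegral_mul_lintegral_of_indepFun
            (hAmeas i) (hBmeas i) (hAB i)
      _ = ∑' i, P {ω | i < N ω} * ∫⁻ ω, ENNReal.ofReal (ξ 0 ω) ∂P := by
          refine tsum_congr fun i => ?_
          congr 1
          · exact hAint i
          · exact ((hident i).comp ENNReal.measurable_ofReal).lintegral_eq
      _ = (∑' i, P {ω | i < N ω}) * ∫⁻ ω, ENNReal.ofReal (ξ 0 ω) ∂P :=
          ENNReal.tsum_mul_right
  -- sum of tail probabilities equals lintegral of N
  have hNsum : (∑' i, P {ω | i < N ω}) = ∫⁻ ω, (N ω : ℝ≥0∞) ∂P := by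
    have : ∀ ω, (N ω : ℝ≥0∞) = ∑' i, A i ω := by
      intro ω
      rw [hA]
      simp only
      rw [tsum_eq_sum (s := Finset.range (N ω)) (by
        intro i hi
        simp only [Finset.mem_range, not_lt] at hi
        simp [Nat.not_lt.mpr hi])]
      rw [Finset.sum_congr rfl fun i hi => if_pos (Finset.mem_range.mp hi)]
      simp
    simp_rw [this]
    rw [lintegral_tsum fun i => (hAmeas i).aemeasurable]
    exact tsum_congr fun i => (hAint i).symm
  -- convert lintegrals of N and ξ 0 to Bochner integrals
  have hNof : ∫⁻ ω, (N ω : ℝ≥0∞) ∂P = ENNReal.ofReal (∫ ω, (N ω : ℝ) ∂P) := by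
    rw [ofReal_integral_eq_lintegral_ofReal hNint (Eventually.of_forall fun ω => by positivity)]
    simp [ENNReal.ofReal_natCast]
  have hξof : ∫⁻ ω, ENNReal.ofReal (ξ 0 ω) ∂P = ENNReal.ofReal (∫ ω, ξ 0 ω ∂P) :=
    (ofReal_integral_eq_lintegral_ofReal hint
      (Eventually.of_forall fun ω => hnonneg 0 ω)).symm
  have hlin' : ∫⁻ ω, ENNReal.ofReal (f ω) ∂P
      = ENNReal.ofReal (∫ ω, (N ω : ℝ) ∂P) * ENNReal.ofReal (∫ ω, ξ 0 ω ∂P) := by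
    rw [hlin, hNsum, hNof, hξof]
  have hfin : ∫⁻ ω, ENNReal.ofReal (f ω) ∂P < ⊤ := by
    rw [hlin']
    exact ENNReal.mul_lt_top ENNReal.ofReal_lt_top ENNReal.ofReal_lt_top
  -- integrability
  have hfnn : ∀ ω, 0 ≤ f ω := fun ω => Finset.sum_nonneg fun i _ => hnonneg i ω
  have hfint : Integrable f P := by
    refine ⟨hfmeas.aestronglyMeasurable, ?_⟩
    rw [hasFiniteIntegral_iff_norm]
    simpa [Real.norm_of_nonneg (hfnn _)] using hfin
  refine ⟨hfint, ?_⟩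
  have h1 : ∫ ω, f ω ∂P = (∫⁻ ω, ENNReal.ofReal (f ω) ∂P).toReal :=
    integral_eq_lintegral_of_nonneg_ae (Eventually.of_forall hfnn)
      hfmeas.aestronglyMeasurable
  rw [h1, hlin', ENNReal.toReal_mul, ENNReal.toReal_ofReal (integral_nonneg fun ω => by positivity),
    ENNReal.toReal_ofReal (integral_nonneg fun ω => hnonneg 0 ω)]
end
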